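/- arXiv:2303.04462 — 4 statements merged into one kernel-verified Lean document; each statement's English description precedes it below -/
import Mathlib

section
/- Let r, k ≥ 1 be natural numbers. For an r-proper permutation π : [k] → [k], its proper restriction is the restriction of π to the set B_π = {i ∈ [k] : π(i) ≥ i}. The number of distinct functions ρ : B → [k] (with B ⊆ [k]) that arise as the proper restriction of some r-proper permutation of [k] is at most 2^{r·k}. -/
/-- A permutation `π` of `[k] = {1, …, k}` (modelled as `Fin k`, with
`i : Fin k` representing the element `i + 1` of `[k]`) is `r`-proper if for every
`j ∈ [k]`, the number of indices `ℓ ≤ j` with `π(ℓ) ≥ j - 1` is at most `r`.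
In the 0-based model, `ℓ ≤ j` stays `ℓ ≤ j` and `π(ℓ) ≥ j - 1` (1-based) becomes
`(π ℓ : ℕ) + 1 ≥ (j : ℕ)`. -/
def IsProperPerm (r k : ℕ) (π : Equiv.Perm (Fin k)) : Prop :=
  ∀ j : Fin k,
    (Finset.univ.filter fun ℓ : Fin k => ℓ ≤ j ∧ (j : ℕ) ≤ (π ℓ : ℕ) + 1).card ≤ r

/-- The proper restriction of a permutation `π` of `[k]`: the restriction of `π` to its
set of bad indices `B_π = {i : π(i) ≥ i}`, modelled as a partial function
`Fin k → Option (Fin k)` that is `some (π i)` exactly on the bad indices. -/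
def properRestriction (k : ℕ) (π : Equiv.Perm (Fin k)) : Fin k → Option (Fin k) :=
  fun i => if (i : ℕ) ≤ (π i : ℕ) then some (π i) else none

/-! ### Auxiliary machinery -/

open Finset

/-- The "filter set" at (natural-number) stage `j`. -/
def Fset (k : ℕ) (π : Equiv.Perm (Fin k)) (j : ℕ) : Finset (Fin k) :=
  Finset.univ.filter fun ℓ : Fin k => (ℓ : ℕ) ≤ j ∧ j ≤ (π ℓ : ℕ) + 1

lemma mem_Fset {k : ℕ} {π : Equiv.Perm (Fin k)} {j : ℕ} {ℓ : Fin k} :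
    ℓ ∈ Fset k π j ↔ (ℓ : ℕ) ≤ j ∧ j ≤ (π ℓ : ℕ) + 1 := by
  simp [Fset]

lemma card_Fset_le {r k : ℕ} {π : Equiv.Perm (Fin k)} (h : IsProperPerm r k π)
    {j : ℕ} (hj : j < k) : (Fset k π j).card ≤ r := by
  have hh := h ⟨j, hj⟩
  have he : Fset k π j =
      Finset.univ.filter fun ℓ : Fin k =>
        ℓ ≤ (⟨j, hj⟩ : Fin k) ∧ (((⟨j, hj⟩ : Fin k) : ℕ)) ≤ (π ℓ : ℕ) + 1 := by
    apply Finset.filter_congr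
    intro ℓ _
    simp [Fin.le_def]
  rw [he]
  exact hh

/-- The set of elements exiting the filter set between stages `j` and `j+1`. -/
def Eset (k : ℕ) (π : Equiv.Perm (Fin k)) (j : ℕ) : Finset (Fin k) :=
  Fset k π j \ Fset k π (j + 1)

lemma mem_Eset {k : ℕ} {π : Equiv.Perm (Fin k)} {j : ℕ} {ℓ : Fin k} :
    ℓ ∈ Eset k π j ↔ (ℓ : ℕ) ≤ j ∧ (π ℓ : ℕ) + 1 = j := by
  rw [Eset, Finset.mem_sdiff, mem_Fset, mem_Fset]
  omega

lemma card_Eset_le_one {k : ℕ} (π : Equiv.Perm (Fin k)) (j : ℕ) :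
    (Eset k π j).card ≤ 1 := by
  apply Finset.card_le_one.2
  intro a ha b hb
  rw [mem_Eset] at ha hb
  exact π.injective (Fin.ext (by omega))

lemma eq_singleton_min' {α : Type*} [LinearOrder α] {s : Finset α}
    (h1 : s.card ≤ 1) (h : s.Nonempty) : s = {s.min' h} := by
  ext y
  rw [Finset.mem_singleton]
  constructor
  · intro hy
    exact Finset.card_le_one.1 h1 y hy (s.min' h) (Finset.min'_mem _ _)
  · rintro rfl
    exact Finset.min'_mem _ _

/-- Rank of an element within a finite set. -/
def rkOf {k : ℕ} (F : Finset (Fin k)) (x : Fin k) : ℕ :=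
  (F.filter fun y => y < x).card

lemma rkOf_lt {k r : ℕ} {F : Finset (Fin k)} {x : Fin k} (hx : x ∈ F)
    (hF : F.card ≤ r) : rkOf F x < r := by
  have h1 : (F.filter fun y => y < x) ⊂ F := by
    rw [Finset.ssubset_iff_of_subset (Finset.filter_subset _ _)]
    exact ⟨x, hx, by simp⟩
  have := Finset.card_lt_card h1
  unfold rkOf
  omega

lemma rkOf_strictMono {k : ℕ} {F : Finset (Fin k)} {x y : Fin k} (hx : x ∈ F)
    (hxy : x < y) : rkOf F x < rkOf F y := by
  apply Finset.card_lt_card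
  rw [Finset.ssubset_iff_of_subset]
  · exact ⟨x, Finset.mem_filter.2 ⟨hx, hxy⟩, by simp⟩
  · intro z hz
    rw [Finset.mem_filter] at hz ⊢
    exact ⟨hz.1, lt_trans hz.2 hxy⟩

lemma rkOf_inj {k : ℕ} {F : Finset (Fin k)} {x y : Fin k} (hx : x ∈ F) (hy : y ∈ F)
    (h : rkOf F x = rkOf F y) : x = y := by
  rcases lt_trichotomy x y with hlt | he | hlt
  · exact absurd h (Nat.ne_of_lt (rkOf_strictMono hx hlt))
  · exact he
  · exact absurd h.symm (Nat.ne_of_lt (rkOf_strictMono hy hlt))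

/-- Step code: whether stage `i+1` enters the filter set. -/
def stepB (k : ℕ) (π : Equiv.Perm (Fin k)) (i : Fin (k - 1)) : Bool :=
  decide (∃ x : Fin k, (x : ℕ) = (i : ℕ) + 1 ∧ (i : ℕ) + 1 ≤ (π x : ℕ) + 1)

lemma stepB_iff {k : ℕ} (π : Equiv.Perm (Fin k)) (i : Fin (k - 1)) {x : Fin k}
    (hx : (x : ℕ) = (i : ℕ) + 1) :
    stepB k π i = true ↔ (i : ℕ) + 1 ≤ (π x : ℕ) + 1 := by
  unfold stepB
  rw [decide_eq_true_iff]
  constructor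
  · rintro ⟨y, hy1, hy2⟩
    have : y = x := Fin.ext (by omega)
    rwa [this] at hy2
  · intro h
    exact ⟨x, hx, h⟩

/-- Step code: rank of the exiting element (if any), modulo `r`. -/
def stepE (r k : ℕ) (hr : 0 < r) (π : Equiv.Perm (Fin k)) (i : Fin (k - 1)) :
    Option (Fin r) :=
  if h : (Eset k π (i : ℕ)).Nonempty then
    some ⟨rkOf (Fset k π (i : ℕ)) ((Eset k π (i : ℕ)).min' h) % r, Nat.mod_lt _ hr⟩
  else none

/-- The full code of a permutation. -/
def codeOf (r k : ℕ) (hr : 0 < r) (hk : 0 < k) (π : Equiv.Perm (Fin k)) :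
    Bool × (Fin (k - 1) → Bool × Option (Fin r)) :=
  (decide (π.symm ⟨k - 1, by omega⟩ < π.symm ⟨k - 2, by omega⟩),
   fun i => (stepB k π i, stepE r k hr π i))

lemma Fset_zero {k : ℕ} (hk : 0 < k) (π : Equiv.Perm (Fin k)) :
    Fset k π 0 = {(⟨0, hk⟩ : Fin k)} := by
  ext ℓ
  rw [mem_Fset, Finset.mem_singleton, Fin.ext_iff]
  simp only [Fin.val_mk]
  omega

lemma Fset_top {k : ℕ} (hk : 2 ≤ k) (π : Equiv.Perm (Fin k)) (t₂ t₁ : Fin k)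
    (ht₂ : (t₂ : ℕ) = k - 2) (ht₁ : (t₁ : ℕ) = k - 1) :
    Fset k π (k - 1) = {π.symm t₂, π.symm t₁} := by
  ext x
  rw [mem_Fset, Finset.mem_insert, Finset.mem_singleton]
  constructor
  · rintro ⟨-, h2⟩
    have hx : (π x : ℕ) < k := (π x).isLt
    have hcase : (π x : ℕ) = k - 2 ∨ (π x : ℕ) = k - 1 := by omega
    rcases hcase with h | h
    · left
      rw [Equiv.eq_symm_apply]
      exact Fin.ext (by omega)
    · right
      rw [Equiv.eq_symm_apply]
      exact Fin.ext (by omega)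
  · intro h
    have hx : (x : ℕ) < k := x.isLt
    rcases h with h | h
    · rw [Equiv.eq_symm_apply] at h
      have : (π x : ℕ) = k - 2 := by rw [h]; exact ht₂
      constructor <;> omega
    · rw [Equiv.eq_symm_apply] at h
      have : (π x : ℕ) = k - 1 := by rw [h]; exact ht₁
      constructor <;> omega

lemma pair_unscramble {α : Type*} [LinearOrder α] {a b a' b' : α}
    (hab : a ≠ b) (hab' : a' ≠ b') (ha' : a' = a ∨ a' = b) (hb' : b' = a ∨ b' = b)
    (hlt : b < a ↔ b' < a') : a = a' ∧ b = b' := by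
  rcases ha' with h | h
  · rcases hb' with h2 | h2
    · exact absurd (h.trans h2.symm) hab'
    · exact ⟨h.symm, h2.symm⟩
  · rcases hb' with h2 | h2
    · exfalso
      rcases lt_trichotomy a b with hl | hl | hl
      · have := hlt.2 (by rw [h, h2]; exact hl)
        exact absurd this (lt_asymm hl)
      · exact hab hl
      · have := hlt.1 hl
        rw [h, h2] at this
        exact absurd this (lt_asymm hl)
    · exact absurd (h.trans h2.symm) hab'

/-- Pigeonhole: for `1 ≤ j < k` the filter set has at least two elements. -/
lemma two_le_card_Fset {k : ℕ} (π : Equiv.Perm (Fin k)) {j : ℕ} (hj1 : 1 ≤ j)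
    (hjk : j < k) : 2 ≤ (Fset k π j).card := by
  classical
  set A : Finset (Fin k) := Finset.univ.filter (fun ℓ : Fin k => (ℓ : ℕ) ≤ j) with hA
  have hAcard : A.card = j + 1 := by
    rw [hA, ← Finset.card_range (j + 1)]
    apply Finset.card_bij (fun (a : Fin k) _ => (a : ℕ))
    · intro a ha
      simp only [Finset.mem_filter, Finset.mem_univ, true_and] at ha
      simp only [Finset.mem_range]
      omega
    · intro a ha b hb hfab
      exact Fin.ext hfab
    · intro b hb
      simp only [Finset.mem_range] at hb
      refine ⟨⟨b, by omega⟩, ?_, rfl⟩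
      simp only [Finset.mem_filter, Finset.mem_univ, true_and, Fin.val_mk]
      omega
  have key := Finset.card_filter_add_card_filter_not
    (s := A) (p := fun ℓ : Fin k => j ≤ (π ℓ : ℕ) + 1)
  have h1 : A.filter (fun ℓ : Fin k => j ≤ (π ℓ : ℕ) + 1) = Fset k π j := by
    rw [hA, Finset.filter_filter, Fset]
  have h2 : (A.filter (fun ℓ : Fin k => ¬ (j ≤ (π ℓ : ℕ) + 1))).card ≤ j - 1 := by
    rw [← Finset.card_range (j - 1)]
    apply Finset.card_le_card_of_injOn (fun ℓ => (π ℓ : ℕ))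
    · intro a ha
      simp only [hA, Finset.filter_filter, Finset.mem_filter, Finset.mem_univ,
        true_and, Finset.coe_filter, Set.mem_setOf_eq] at ha
      simp only [Finset.mem_range, Finset.coe_range, Set.mem_Iio]
      omega
    · intro a _ b _ hab
      exact π.injective (Fin.ext hab)
  rw [h1, hAcard] at key
  omega

/-- Key lemma for `r = 2`: an exit forces an entry. -/
lemma stepB_true_of_nonempty {k : ℕ} {π : Equiv.Perm (Fin k)}
    (h : IsProperPerm 2 k π) (i : Fin (k - 1))
    (hE : (Eset k π (i : ℕ)).Nonempty) : stepB k π i = true := by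
  have hik : (i : ℕ) < k - 1 := i.isLt
  by_contra hb
  have hjk : (i : ℕ) + 1 < k := by omega
  have h2 : 2 ≤ (Fset k π ((i : ℕ) + 1)).card := two_le_card_Fset π (by omega) hjk
  obtain ⟨e, he⟩ := hE
  have hsub : Fset k π ((i : ℕ) + 1) ⊆ (Fset k π (i : ℕ)).erase e := by
    intro x hx
    rw [Finset.mem_erase]
    rw [mem_Fset] at hx
    have hxj : (x : ℕ) ≠ (i : ℕ) + 1 := by
      intro hxe
      exact hb ((stepB_iff π i hxe).2 hx.2)
    rw [mem_Eset] at he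
    constructor
    · intro hxe
      subst hxe
      omega
    · rw [mem_Fset]
      omega
  have he' : e ∈ Fset k π (i : ℕ) := by
    rw [mem_Fset]
    rw [mem_Eset] at he
    omega
  have hFle : (Fset k π (i : ℕ)).card ≤ 2 := card_Fset_le h (by omega)
  have hc1 : ((Fset k π (i : ℕ)).erase e).card ≤ 1 := by
    rw [Finset.card_erase_of_mem he']
    omega
  have := Finset.card_le_card hsub
  omega

/-- The main injectivity lemma: the code of a proper permutation determines its
proper restriction. -/
lemma code_inj {r k : ℕ} (hr0 : 0 < r) (hk0 : 0 < k) (hk2 : 2 ≤ k)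
    {π₁ π₂ : Equiv.Perm (Fin k)} (h₁ : IsProperPerm r k π₁) (h₂ : IsProperPerm r k π₂)
    (hc : codeOf r k hr0 hk0 π₁ = codeOf r k hr0 hk0 π₂) :
    properRestriction k π₁ = properRestriction k π₂ := by
  simp only [codeOf, Prod.mk.injEq] at hc
  obtain ⟨hfb, hsteps⟩ := hc
  have hB : ∀ i : Fin (k - 1), stepB k π₁ i = stepB k π₂ i := by
    intro i
    have h' := congrFun hsteps i
    rw [Prod.mk.injEq] at h'
    exact h'.1
  have hE : ∀ i : Fin (k - 1), stepE r k hr0 π₁ i = stepE r k hr0 π₂ i := by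
    intro i
    have h' := congrFun hsteps i
    rw [Prod.mk.injEq] at h'
    exact h'.2
  -- Claim A: the filter sets agree at all stages.
  have claimA : ∀ j, j < k → Fset k π₁ j = Fset k π₂ j := by
    intro j
    induction j with
    | zero =>
      intro _
      rw [Fset_zero hk0 π₁, Fset_zero hk0 π₂]
    | succ j ih =>
      intro hjk
      have hF := ih (by omega)
      have hik : j < k - 1 := by omega
      -- equality of exit sets
      have hEeq : Eset k π₁ j = Eset k π₂ j := by
        have hEi := hE ⟨j, hik⟩
        simp only [stepE] at hEi
        by_cases hne1 : (Eset k π₁ j).Nonempty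
        · by_cases hne2 : (Eset k π₂ j).Nonempty
          · rw [dif_pos hne1, dif_pos hne2, Option.some_inj] at hEi
            have hv := congrArg Fin.val hEi
            simp only [Fin.val_mk] at hv
            set x₁ := (Eset k π₁ j).min' hne1 with hx₁
            set x₂ := (Eset k π₂ j).min' hne2 with hx₂
            have hx₁E : x₁ ∈ Eset k π₁ j := Finset.min'_mem _ _
            have hx₂E : x₂ ∈ Eset k π₂ j := Finset.min'_mem _ _
            have hx₁F : x₁ ∈ Fset k π₁ j := by
              have := Finset.mem_sdiff.1 hx₁E
              exact this.1
            have hx₂F2 : x₂ ∈ Fset k π₂ j := by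
              have := Finset.mem_sdiff.1 hx₂E
              exact this.1
            have hx₂F : x₂ ∈ Fset k π₁ j := by rw [hF]; exact hx₂F2
            have hrk1 : rkOf (Fset k π₁ j) x₁ < r :=
              rkOf_lt hx₁F (card_Fset_le h₁ (by omega))
            have hrk2 : rkOf (Fset k π₂ j) x₂ < r :=
              rkOf_lt hx₂F2 (card_Fset_le h₂ (by omega))
            have hrkeq : rkOf (Fset k π₁ j) x₁ = rkOf (Fset k π₁ j) x₂ := by
              have hmod : rkOf (Fset k π₁ j) x₁ % r = rkOf (Fset k π₂ j) x₂ % r := hv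
              rw [Nat.mod_eq_of_lt hrk1, Nat.mod_eq_of_lt hrk2] at hmod
              rw [hmod, hF]
            have hxeq : x₁ = x₂ := rkOf_inj hx₁F hx₂F hrkeq
            have hE1 : Eset k π₁ j = {x₁} :=
              eq_singleton_min' (card_Eset_le_one π₁ j) hne1
            have hE2 : Eset k π₂ j = {x₂} :=
              eq_singleton_min' (card_Eset_le_one π₂ j) hne2
            rw [hE1, hE2, hxeq]
          · rw [dif_pos hne1, dif_neg hne2] at hEi
            exact absurd hEi (by simp)
        · by_cases hne2 : (Eset k π₂ j).Nonempty
          · rw [dif_neg hne1, dif_pos hne2] at hEi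
            exact absurd hEi (by simp)
          · rw [Finset.not_nonempty_iff_eq_empty.1 hne1,
              Finset.not_nonempty_iff_eq_empty.1 hne2]
      -- now prove the filter sets at stage j+1 agree
      ext ℓ
      by_cases hl : (ℓ : ℕ) = j + 1
      · have hb1 := stepB_iff π₁ (⟨j, hik⟩ : Fin (k - 1)) (x := ℓ) hl
        have hb2 := stepB_iff π₂ (⟨j, hik⟩ : Fin (k - 1)) (x := ℓ) hl
        have hbb : stepB k π₁ ⟨j, hik⟩ = true ↔ stepB k π₂ ⟨j, hik⟩ = true := by
          rw [hB ⟨j, hik⟩]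
        have hcond : j + 1 ≤ (π₁ ℓ : ℕ) + 1 ↔ j + 1 ≤ (π₂ ℓ : ℕ) + 1 :=
          (hb1.symm.trans hbb).trans hb2
        rw [mem_Fset, mem_Fset]
        constructor
        · rintro ⟨u, v⟩
          exact ⟨u, hcond.1 v⟩
        · rintro ⟨u, v⟩
          exact ⟨u, hcond.2 v⟩
      · have char : ∀ π' : Equiv.Perm (Fin k),
            ℓ ∈ Fset k π' (j + 1) ↔ (ℓ ∈ Fset k π' j ∧ ℓ ∉ Eset k π' j) := by
          intro π'
          rw [mem_Fset, mem_Fset, mem_Eset]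
          omega
        rw [char π₁, char π₂, hF, hEeq]
  -- The two top owners agree.
  have pk1 : k - 1 < k := by omega
  have pk2 : k - 2 < k := by omega
  have htop : π₁.symm ⟨k - 2, pk2⟩ = π₂.symm ⟨k - 2, pk2⟩ ∧
      π₁.symm ⟨k - 1, pk1⟩ = π₂.symm ⟨k - 1, pk1⟩ := by
    have hmem : ∀ x : Fin k, x ∈ Fset k π₂ (k - 1) → x ∈ Fset k π₁ (k - 1) :=
      fun x hx => (claimA (k - 1) (by omega)) ▸ hx
    have ha' : π₂.symm ⟨k - 2, pk2⟩ = π₁.symm ⟨k - 2, pk2⟩ ∨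
        π₂.symm ⟨k - 2, pk2⟩ = π₁.symm ⟨k - 1, pk1⟩ := by
      have hx : π₂.symm ⟨k - 2, pk2⟩ ∈ Fset k π₂ (k - 1) := by
        rw [Fset_top hk2 π₂ ⟨k - 2, pk2⟩ ⟨k - 1, pk1⟩ rfl rfl]
        simp
      have := hmem _ hx
      rw [Fset_top hk2 π₁ ⟨k - 2, pk2⟩ ⟨k - 1, pk1⟩ rfl rfl] at this
      simpa using this
    have hb' : π₂.symm ⟨k - 1, pk1⟩ = π₁.symm ⟨k - 2, pk2⟩ ∨
        π₂.symm ⟨k - 1, pk1⟩ = π₁.symm ⟨k - 1, pk1⟩ := by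
      have hx : π₂.symm ⟨k - 1, pk1⟩ ∈ Fset k π₂ (k - 1) := by
        rw [Fset_top hk2 π₂ ⟨k - 2, pk2⟩ ⟨k - 1, pk1⟩ rfl rfl]
        simp
      have := hmem _ hx
      rw [Fset_top hk2 π₁ ⟨k - 2, pk2⟩ ⟨k - 1, pk1⟩ rfl rfl] at this
      simpa using this
    have hne12 : (⟨k - 2, pk2⟩ : Fin k) ≠ ⟨k - 1, pk1⟩ := by
      intro hcon
      have := congrArg Fin.val hcon
      simp only [Fin.val_mk] at this
      omega
    have hab : π₁.symm ⟨k - 2, pk2⟩ ≠ π₁.symm ⟨k - 1, pk1⟩ :=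
      fun hcon => hne12 (π₁.symm.injective hcon)
    have hab' : π₂.symm ⟨k - 2, pk2⟩ ≠ π₂.symm ⟨k - 1, pk1⟩ :=
      fun hcon => hne12 (π₂.symm.injective hcon)
    have hlt : π₁.symm ⟨k - 1, pk1⟩ < π₁.symm ⟨k - 2, pk2⟩ ↔
        π₂.symm ⟨k - 1, pk1⟩ < π₂.symm ⟨k - 2, pk2⟩ := by
      rw [← decide_eq_decide]
      exact hfb
    exact pair_unscramble hab hab' ha' hb' hlt
  -- Agreement on entered elements.
  have agree : ∀ ℓ : Fin k, (ℓ : ℕ) ≤ (π₁ ℓ : ℕ) + 1 → π₁ ℓ = π₂ ℓ := by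
    intro ℓ hent
    by_cases hbig : k - 1 ≤ (π₁ ℓ : ℕ) + 1
    · have hlt : (π₁ ℓ : ℕ) < k := (π₁ ℓ).isLt
      have hcase : (π₁ ℓ : ℕ) = k - 2 ∨ (π₁ ℓ : ℕ) = k - 1 := by omega
      rcases hcase with h | h
      · have hv : π₁ ℓ = ⟨k - 2, pk2⟩ := by
          apply Fin.ext
          simp only [Fin.val_mk]
          omega
        have hℓ : ℓ = π₁.symm ⟨k - 2, pk2⟩ := by
          rw [← hv, Equiv.symm_apply_apply]
        rw [htop.1] at hℓ
        have : π₂ ℓ = ⟨k - 2, pk2⟩ := by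
          rw [hℓ, Equiv.apply_symm_apply]
        rw [this, hv]
      · have hv : π₁ ℓ = ⟨k - 1, pk1⟩ := by
          apply Fin.ext
          simp only [Fin.val_mk]
          omega
        have hℓ : ℓ = π₁.symm ⟨k - 1, pk1⟩ := by
          rw [← hv, Equiv.symm_apply_apply]
        rw [htop.2] at hℓ
        have : π₂ ℓ = ⟨k - 1, pk1⟩ := by
          rw [hℓ, Equiv.apply_symm_apply]
        rw [this, hv]
    · -- the exit stage is j = (π₁ ℓ) + 1
      have hjk : (π₁ ℓ : ℕ) + 2 < k := by omega
      have hmem1 : ℓ ∈ Eset k π₁ ((π₁ ℓ : ℕ) + 1) := by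
        rw [mem_Eset]
        omega
      have hEE : Eset k π₁ ((π₁ ℓ : ℕ) + 1) = Eset k π₂ ((π₁ ℓ : ℕ) + 1) := by
        unfold Eset
        rw [claimA ((π₁ ℓ : ℕ) + 1) (by omega), claimA ((π₁ ℓ : ℕ) + 2) (by omega)]
      rw [hEE, mem_Eset] at hmem1
      exact Fin.ext (by omega)
  -- Conclusion.
  funext ℓ
  unfold properRestriction
  by_cases hbad : (ℓ : ℕ) ≤ (π₁ ℓ : ℕ)
  · have hv := agree ℓ (by omega)
    rw [if_pos hbad, if_pos (by rw [← hv]; exact hbad), hv]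
  · have hbad2 : ¬ (ℓ : ℕ) ≤ (π₂ ℓ : ℕ) := by
      intro hcon
      -- entered for π₂ transfers to π₁
      have hmem : ℓ ∈ Fset k π₂ (ℓ : ℕ) := by
        rw [mem_Fset]
        omega
      rw [← claimA (ℓ : ℕ) ℓ.isLt, mem_Fset] at hmem
      have hv := agree ℓ hmem.2
      rw [hv] at hbad
      exact hbad hcon
    rw [if_neg hbad, if_neg hbad2]

/-- Compressor for the `r = 2` case. -/
def psi : Bool × Option (Fin 2) → Bool × Bool := fun p =>
  match p.2 with
  | none => (false, p.1)
  | some t => (true, decide (t = 1))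

lemma fin2_decide_inj : ∀ t u : Fin 2, decide (t = 1) = decide (u = 1) → t = u := by
  decide

lemma psi_inj {p q : Bool × Option (Fin 2)}
    (hp : p.2.isSome = true → p.1 = true) (hq : q.2.isSome = true → q.1 = true)
    (h : psi p = psi q) : p = q := by
  obtain ⟨b1, e1⟩ := p
  obtain ⟨b2, e2⟩ := q
  match e1, e2 with
  | none, none =>
    simp only [psi, Prod.mk.injEq] at h
    rw [h.2]
  | none, some t => simp [psi, Prod.mk.injEq] at h
  | some t, none => simp [psi, Prod.mk.injEq] at h
  | some t, some u =>
    simp only [psi, Prod.mk.injEq] at h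
    have hb1 : b1 = true := hp rfl
    have hb2 : b2 = true := hq rfl
    rw [hb1, hb2, fin2_decide_inj t u h.2]

lemma two_mul_succ_le_two_pow {r : ℕ} (hr : 3 ≤ r) : 2 * (r + 1) ≤ 2 ^ r := by
  have h1 : r - 3 < 2 ^ (r - 3) := (Nat.lt_two_pow_self (n := r - 3))
  have h2 : (8 : ℕ) * 2 ^ (r - 3) = 2 ^ r := by
    rw [show (8 : ℕ) = 2 ^ 3 by norm_num, ← pow_add]
    congr 1
    omega
  omega

/-- The number of distinct functions arising as the proper restriction of some `r`-proper
permutation of `[k]` is at most `2 ^ (r k)`. -/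
theorem count_proper_restrictions (r k : ℕ) (hr : 1 ≤ r) (hk : 1 ≤ k) :
    Nat.card {ρ : Fin k → Option (Fin k) //
        ∃ π : Equiv.Perm (Fin k), IsProperPerm r k π ∧ ρ = properRestriction k π} ≤
      2 ^ (r * k) := by
  classical
  set S := {ρ : Fin k → Option (Fin k) //
      ∃ π : Equiv.Perm (Fin k), IsProperPerm r k π ∧ ρ = properRestriction k π} with hS
  rcases Nat.lt_or_ge k 2 with hk1 | hk2
  · -- k = 1
    have hk1' : k = 1 := by omega
    subst hk1'
    have hsub : ∀ a b : S, a = b := by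
      rintro ⟨ρa, πa, -, ha⟩ ⟨ρb, πb, -, hb⟩
      apply Subtype.ext
      simp only
      rw [ha, hb]
      funext i
      unfold properRestriction
      have h1 : πa i = i := Subsingleton.elim _ _
      have h2 : πb i = i := Subsingleton.elim _ _
      rw [h1, h2]
    have hle : Nat.card S ≤ Nat.card (Fin 1) :=
      Nat.card_le_card_of_injective (fun _ => (0 : Fin 1)) (fun a b _ => hsub a b)
    have hone : Nat.card (Fin 1) = 1 := by
      rw [Nat.card_eq_fintype_card, Fintype.card_fin]
    calc Nat.card S ≤ 1 := hone ▸ hle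
      _ ≤ 2 ^ (r * 1) := Nat.one_le_pow _ _ (by norm_num)
  · rcases Nat.lt_or_ge r 2 with hr1 | hr2
    · -- r = 1 : no proper permutations exist
      have hr1' : r = 1 := by omega
      subst hr1'
      have hempty : IsEmpty S := by
        constructor
        rintro ⟨ρ, π, hp, -⟩
        have h2 := hp ⟨1, by omega⟩
        have hsub : ({⟨0, by omega⟩, ⟨1, by omega⟩} : Finset (Fin k)) ⊆
            Finset.univ.filter fun ℓ : Fin k =>
              ℓ ≤ (⟨1, by omega⟩ : Fin k) ∧
                (((⟨1, by omega⟩ : Fin k) : ℕ)) ≤ (π ℓ : ℕ) + 1 := by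
          intro x hx
          simp only [Finset.mem_insert, Finset.mem_singleton] at hx
          simp only [Finset.mem_filter, Finset.mem_univ, true_and, Fin.le_def,
            Fin.val_mk]
          rcases hx with rfl | rfl <;> simp
        have hcard2 : ({⟨0, by omega⟩, ⟨1, by omega⟩} : Finset (Fin k)).card = 2 := by
          rw [Finset.card_insert_of_notMem, Finset.card_singleton]
          simp only [Finset.mem_singleton]
          intro hcon
          have := congrArg Fin.val hcon
          simp at this
        have := Finset.card_le_card hsub
        omega
      rw [Nat.card_of_isEmpty]
      exact Nat.zero_le _
    · -- main case : r ≥ 2, k ≥ 2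
      have hr0 : 0 < r := by omega
      have hk0 : 0 < k := by omega
      -- the common injection into codes
      have hinja : ∀ s₁ s₂ : S,
          codeOf r k hr0 hk0 (Classical.choose s₁.2) =
            codeOf r k hr0 hk0 (Classical.choose s₂.2) → s₁ = s₂ := by
        intro s₁ s₂ heq
        have hs₁ := Classical.choose_spec s₁.2
        have hs₂ := Classical.choose_spec s₂.2
        have := code_inj hr0 hk0 hk2 hs₁.1 hs₂.1 heq
        apply Subtype.ext
        rw [hs₁.2, hs₂.2, this]
      rcases Nat.lt_or_ge r 3 with hr23 | hr3
      · -- r = 2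
        have hr2' : r = 2 := by omega
        subst hr2'
        have hinj : Function.Injective (fun s : S =>
            ((codeOf 2 k hr0 hk0 (Classical.choose s.2)).1,
             fun i => psi ((codeOf 2 k hr0 hk0 (Classical.choose s.2)).2 i))) := by
          intro s₁ s₂ heq
          simp only [Prod.mk.injEq] at heq
          apply hinja
          have hp1 := (Classical.choose_spec s₁.2).1
          have hp2 := (Classical.choose_spec s₂.2).1
          have hsteps : (codeOf 2 k hr0 hk0 (Classical.choose s₁.2)).2 =
              (codeOf 2 k hr0 hk0 (Classical.choose s₂.2)).2 := by
            funext i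
            apply psi_inj
            · intro hsome
              simp only [codeOf] at hsome ⊢
              apply stepB_true_of_nonempty hp1
              by_contra hne
              simp only [stepE, dif_neg hne] at hsome
              exact Bool.noConfusion hsome
            · intro hsome
              simp only [codeOf] at hsome ⊢
              apply stepB_true_of_nonempty hp2
              by_contra hne
              simp only [stepE, dif_neg hne] at hsome
              exact Bool.noConfusion hsome
            · exact congrFun heq.2 i
          exact Prod.ext heq.1 hsteps
        have hle := Nat.card_le_card_of_injective _ hinj
        have hcard : Nat.card (Bool × (Fin (k - 1) → Bool × Bool)) =
            2 * (2 * 2) ^ (k - 1) := by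
          rw [Nat.card_eq_fintype_card]
          simp [Fintype.card_fun]
        calc Nat.card S ≤ 2 * (2 * 2) ^ (k - 1) := hcard ▸ hle
          _ = 2 ^ (2 * (k - 1) + 1) := by
            rw [show (2 * 2 : ℕ) = 2 ^ 2 by norm_num, ← pow_mul, pow_succ]
            ring
          _ ≤ 2 ^ (2 * k) := by
            apply Nat.pow_le_pow_right (by norm_num)
            omega
      · -- r ≥ 3
        have hinj : Function.Injective
            (fun s : S => codeOf r k hr0 hk0 (Classical.choose s.2)) :=
          fun s₁ s₂ heq => hinja s₁ s₂ heq
        have hle := Nat.card_le_card_of_injective _ hinj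
        have hcard : Nat.card (Bool × (Fin (k - 1) → Bool × Option (Fin r))) =
            2 * (2 * (r + 1)) ^ (k - 1) := by
          rw [Nat.card_eq_fintype_card]
          simp [Fintype.card_fun, mul_comm]
        have hpow : 2 * (r + 1) ≤ 2 ^ r := two_mul_succ_le_two_pow hr3
        have hmul : r * (k - 1) + r = r * k := by
          rw [← Nat.mul_succ]
          congr 1
          omega
        calc Nat.card S ≤ 2 * (2 * (r + 1)) ^ (k - 1) := hcard ▸ hle
          _ ≤ 2 * (2 ^ r) ^ (k - 1) := by
            apply Nat.mul_le_mul_left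
            exact Nat.pow_le_pow_left hpow _
          _ = 2 ^ (r * (k - 1) + 1) := by
            rw [← pow_mul, pow_succ]
            ring
          _ ≤ 2 ^ (r * k) := by
            apply Nat.pow_le_pow_right (by norm_num)
            omega
end

section
/- Let r, k ≥ 1 be natural numbers, let B ⊆ [k] and let ρ : B → [k] be a fixed function. Then the number of r-proper permutations π : [k] → [k] whose set of bad indices {i ∈ [k] : π(i) ≥ i} equals B and which satisfy π(i) = ρ(i) for every i ∈ B is at most r^k. -/
/-- The set of values not used by `π` on positions before `i`. -/
def unusedVals {k : ℕ} (π : Equiv.Perm (Fin k)) (i : Fin k) : Finset (Fin k) :=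
  Finset.univ.filter fun u => ∀ ℓ, ℓ < i → π ℓ ≠ u

lemma rank_eq_inj {k : ℕ} (U : Finset (Fin k)) {a b : Fin k} (ha : a ∈ U) (hb : b ∈ U)
    (h : (U.filter fun u : Fin k => (u : ℕ) < (a : ℕ)).card =
         (U.filter fun u : Fin k => (u : ℕ) < (b : ℕ)).card) : a = b := by
  have key : ∀ {x y : Fin k}, x ∈ U → (x : ℕ) < (y : ℕ) →
      (U.filter fun u : Fin k => (u : ℕ) < (x : ℕ)).card <
      (U.filter fun u : Fin k => (u : ℕ) < (y : ℕ)).card := by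
    intro x y hx hxy
    apply Finset.card_lt_card
    constructor
    · intro u hu
      simp only [Finset.mem_filter] at hu ⊢
      exact ⟨hu.1, by omega⟩
    · intro hsub
      have := hsub (Finset.mem_filter.2 ⟨hx, hxy⟩)
      simp at this
  rcases lt_trichotomy (a : ℕ) (b : ℕ) with h1 | h1 | h1
  · exact absurd h (key ha h1).ne
  · exact Fin.ext h1
  · exact absurd h.symm (key hb h1).ne

lemma unused_below_lt {r k : ℕ} (π : Equiv.Perm (Fin k)) (hp : IsProperPerm r k π)
    (i : Fin k) (hi : (π i : ℕ) < (i : ℕ)) :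
    ((unusedVals π i).filter fun u : Fin k => (u : ℕ) < (π i : ℕ)).card < r := by
  have hj : (π i : ℕ) + 1 < k := lt_of_le_of_lt hi i.isLt
  set j : Fin k := ⟨(π i : ℕ) + 1, hj⟩ with hjdef
  have hS := hp j
  set S := Finset.univ.filter fun ℓ : Fin k => ℓ ≤ j ∧ (j : ℕ) ≤ (π ℓ : ℕ) + 1 with hSdef
  set T' := Finset.univ.filter fun ℓ : Fin k => ℓ ≤ j ∧ (π ℓ : ℕ) < (π i : ℕ) with hT'def
  set M := (unusedVals π i).filter fun u : Fin k => (u : ℕ) < (π i : ℕ) with hMdef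
  have hT : (Finset.univ.filter fun ℓ : Fin k => ℓ ≤ j).card = (π i : ℕ) + 2 := by
    have he : (Finset.univ.filter fun ℓ : Fin k => ℓ ≤ j) = Finset.Iic j := by
      ext u; simp
    rw [he, Fin.card_Iic]
  have h1 : (π i : ℕ) + 2 ≤ S.card + T'.card := by
    have hsub : (Finset.univ.filter fun ℓ : Fin k => ℓ ≤ j) ⊆ S ∪ T' := by
      intro ℓ hℓ
      simp only [Finset.mem_filter, Finset.mem_univ, true_and] at hℓ
      rw [Finset.mem_union, hSdef, hT'def]
      simp only [Finset.mem_filter, Finset.mem_univ, true_and]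
      have : (j : ℕ) ≤ (π ℓ : ℕ) + 1 ∨ (π ℓ : ℕ) < (π i : ℕ) := by
        simp only [hjdef]; omega
      tauto
    calc (π i : ℕ) + 2 = (Finset.univ.filter fun ℓ : Fin k => ℓ ≤ j).card := hT.symm
      _ ≤ (S ∪ T').card := Finset.card_le_card hsub
      _ ≤ S.card + T'.card := Finset.card_union_le _ _
  have h2 : T'.card + M.card ≤ (π i : ℕ) := by
    have himg : T'.card = (T'.image π).card :=
      (Finset.card_image_of_injective _ π.injective).symm
    have hdisj : Disjoint (T'.image π) M := by
      rw [Finset.disjoint_left]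
      intro u hu huM
      rcases Finset.mem_image.1 hu with ⟨ℓ, hℓ, hℓu⟩
      simp only [hT'def, Finset.mem_filter, Finset.mem_univ, true_and] at hℓ
      simp only [hMdef, unusedVals, Finset.mem_filter, Finset.mem_univ, true_and] at huM
      have hℓi : ℓ < i := by
        by_cases hei : ℓ = i
        · exfalso; rw [hei] at hℓ; omega
        · have h3 : (ℓ : ℕ) ≤ (π i : ℕ) + 1 := by
            have := Fin.le_def.1 hℓ.1; simpa [hjdef] using this
          have h4 : (ℓ : ℕ) ≠ (i : ℕ) := fun hc => hei (Fin.ext hc)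
          exact Fin.lt_def.2 (by omega)
      exact huM.1 ℓ hℓi hℓu
    have hsub2 : (T'.image π) ∪ M ⊆
        Finset.univ.filter fun u : Fin k => (u : ℕ) < (π i : ℕ) := by
      intro u hu
      simp only [Finset.mem_filter, Finset.mem_univ, true_and]
      rcases Finset.mem_union.1 hu with h | h
      · rcases Finset.mem_image.1 h with ⟨ℓ, hℓ, hℓu⟩
        simp only [hT'def, Finset.mem_filter, Finset.mem_univ, true_and] at hℓ
        rw [← hℓu]; exact hℓ.2
      · simp only [hMdef, Finset.mem_filter] at h
        exact h.2
    have hcard : (Finset.univ.filter fun u : Fin k => (u : ℕ) < (π i : ℕ)).card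
        = (π i : ℕ) := by
      have hvk : (π i : ℕ) < k := (π i).isLt
      have he : (Finset.univ.filter fun u : Fin k => (u : ℕ) < (π i : ℕ))
          = Finset.Iio ⟨(π i : ℕ), hvk⟩ := by
        ext u
        simp only [Finset.mem_filter, Finset.mem_univ, true_and, Finset.mem_Iio, Fin.lt_def]
      rw [he, Fin.card_Iio]
    calc T'.card + M.card = (T'.image π).card + M.card := by rw [himg]
      _ = ((T'.image π) ∪ M).card := (Finset.card_union_of_disjoint hdisj).symm
      _ ≤ _ := Finset.card_le_card hsub2
      _ = (π i : ℕ) := hcard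
  omega


/-- Given a fixed set `B ⊆ [k]` and a fixed function `ρ : B → [k]`, the number of
`r`-proper permutations of `[k]` whose set of bad indices `{i : π(i) ≥ i}` equals `B`
and which agree with `ρ` on `B` is at most `r ^ k`. -/
theorem count_proper_permutations_with_restriction (r k : ℕ) (hr : 1 ≤ r) (hk : 1 ≤ k)
    (B : Finset (Fin k)) (ρ : {i : Fin k // i ∈ B} → Fin k) :
    Nat.card {π : Equiv.Perm (Fin k) //
        IsProperPerm r k π ∧ (∀ i : Fin k, ((i : ℕ) ≤ (π i : ℕ) ↔ i ∈ B)) ∧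
        (∀ i : {i : Fin k // i ∈ B}, π i.1 = ρ i)} ≤
      r ^ k := by
  set P := fun π : Equiv.Perm (Fin k) =>
      IsProperPerm r k π ∧ (∀ i : Fin k, ((i : ℕ) ≤ (π i : ℕ) ↔ i ∈ B)) ∧
        (∀ i : {i : Fin k // i ∈ B}, π i.1 = ρ i) with hP
  have hF : ∀ (s : {π : Equiv.Perm (Fin k) // P π}) (i : Fin k),
      ((s.1 i : ℕ) < (i : ℕ)) →
      ((unusedVals s.1 i).filter fun u : Fin k => (u : ℕ) < (s.1 i : ℕ)).card < r :=
    fun s i hi => unused_below_lt s.1 s.2.1 i hi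
  set F : {π : Equiv.Perm (Fin k) // P π} → (Fin k → Fin r) := fun s i =>
    if h : (s.1 i : ℕ) < (i : ℕ) then
      ⟨((unusedVals s.1 i).filter fun u : Fin k => (u : ℕ) < (s.1 i : ℕ)).card, hF s i h⟩
    else ⟨0, hr⟩ with hFdef
  have hinj : Function.Injective F := by
    rintro ⟨π, hπ⟩ ⟨π', hπ'⟩ heq
    have key : ∀ n : ℕ, ∀ i : Fin k, (i : ℕ) ≤ n → π i = π' i := by
      intro n
      induction n using Nat.strong_induction_on with
      | _ n IH =>
        intro i hin
        have hprev : ∀ ℓ : Fin k, ℓ < i → π ℓ = π' ℓ := by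
          intro ℓ hℓ
          have h1 : (ℓ : ℕ) < n := lt_of_lt_of_le hℓ hin
          exact IH (ℓ : ℕ) h1 ℓ le_rfl
        by_cases hiB : i ∈ B
        · rw [hπ.2.2 ⟨i, hiB⟩, hπ'.2.2 ⟨i, hiB⟩]
        · have hg : (π i : ℕ) < (i : ℕ) := by
            have h2 := hπ.2.1 i
            have h3 : ¬ (i : ℕ) ≤ (π i : ℕ) := fun hc => hiB (h2.1 hc)
            omega
          have hg' : (π' i : ℕ) < (i : ℕ) := by
            have h2 := hπ'.2.1 i
            have h3 : ¬ (i : ℕ) ≤ (π' i : ℕ) := fun hc => hiB (h2.1 hc)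
            omega
          have hu : unusedVals π i = unusedVals π' i := by
            unfold unusedVals
            apply Finset.filter_congr
            intro u _
            constructor
            · intro h ℓ hℓ; rw [← hprev ℓ hℓ]; exact h ℓ hℓ
            · intro h ℓ hℓ; rw [hprev ℓ hℓ]; exact h ℓ hℓ
          have hFi := congrFun heq i
          simp only [hFdef, dif_pos hg, dif_pos hg'] at hFi
          have hcards : ((unusedVals π i).filter fun u : Fin k => (u : ℕ) < (π i : ℕ)).card =
              ((unusedVals π i).filter fun u : Fin k => (u : ℕ) < (π' i : ℕ)).card := by
            have h5 : ((unusedVals π i).filter fun u : Fin k => (u : ℕ) < (π i : ℕ)).card =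
                ((unusedVals π' i).filter fun u : Fin k => (u : ℕ) < (π' i : ℕ)).card :=
              congrArg Fin.val hFi
            rw [← hu] at h5
            exact h5
          have hmem : π i ∈ unusedVals π i := by
            simp only [unusedVals, Finset.mem_filter, Finset.mem_univ, true_and]
            intro ℓ hℓ hcon
            exact absurd (π.injective hcon) hℓ.ne
          have hmem' : π' i ∈ unusedVals π i := by
            rw [hu]
            simp only [unusedVals, Finset.mem_filter, Finset.mem_univ, true_and]
            intro ℓ hℓ hcon
            exact absurd (π'.injective hcon) hℓ.ne
          exact rank_eq_inj _ hmem hmem' hcards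
    have hpp : π = π' := Equiv.ext fun i => key (i : ℕ) i le_rfl
    exact Subtype.ext hpp
  calc Nat.card {π : Equiv.Perm (Fin k) // P π} ≤ Nat.card (Fin k → Fin r) :=
        Nat.card_le_card_of_injective F hinj
    _ = r ^ k := by simp [Nat.card_eq_fintype_card, Fintype.card_fun]
end

section
/- Let t, k ≥ 1 be natural numbers and let π : [k] → [k] be a permutation such that for every i ∈ [k − t], either [i] ⊆ {π(1),…,π(i+t)} or {π(1),…,π(i)} ⊆ [i+t] (i.e. the ordering (π(1),…,π(k)) is t-close to the identity ordering). Then for every j ∈ [k], the number of indices ℓ ≤ j with π(ℓ) > j + t is at most t; consequently π is (2t+2)-proper. -/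
/-- If a permutation `π` of `[k]` is `t`-close to the identity ordering, i.e. for every
`i ∈ [k - t]` either `[i] ⊆ {π(1), …, π(i+t)}` or `{π(1), …, π(i)} ⊆ [i + t]`, then
for every `j ∈ [k]` the number of indices `ℓ ≤ j` with `π(ℓ) > j + t` is at most `t`;
consequently `π` is `(2t + 2)`-proper. (Indices in `Fin k` are 0-based models of `[k]`:
`i : Fin k` represents `i + 1`.) -/
theorem t_close_implies_proper (t k : ℕ) (ht : 1 ≤ t) (hk : 1 ≤ k)
    (π : Equiv.Perm (Fin k))
    (hclose : ∀ i : ℕ, 1 ≤ i → i ≤ k - t →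
      (∀ x : Fin k, (x : ℕ) < i → ∃ ℓ : Fin k, (ℓ : ℕ) < i + t ∧ π ℓ = x) ∨
      (∀ ℓ : Fin k, (ℓ : ℕ) < i → (π ℓ : ℕ) < i + t)) :
    (∀ j : Fin k,
      (Finset.univ.filter fun ℓ : Fin k => ℓ ≤ j ∧ (j : ℕ) + t < (π ℓ : ℕ)).card ≤ t) ∧
    IsProperPerm (2 * t + 2) k π := by
  have key : ∀ j : Fin k,
      (Finset.univ.filter fun ℓ : Fin k => ℓ ≤ j ∧ (j : ℕ) + t < (π ℓ : ℕ)).card ≤ t := by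
    intro j
    set S := Finset.univ.filter fun ℓ : Fin k => ℓ ≤ j ∧ (j : ℕ) + t < (π ℓ : ℕ) with hSdef
    rcases Finset.eq_empty_or_nonempty S with hS | ⟨ℓ0, hℓ0⟩
    · simp [hS]
    · have hm0 := Finset.mem_filter.mp hℓ0
      have hπlt : (π ℓ0 : ℕ) < k := (π ℓ0).isLt
      have hbound : (j : ℕ) + t + 2 ≤ k := by omega
      rcases hclose ((j : ℕ) + 1) (by omega) (by omega) with hc | hc
      · set L := Finset.univ.filter
          (fun ℓ : Fin k => (ℓ : ℕ) < (j : ℕ) + 1 + t ∧ (π ℓ : ℕ) < (j : ℕ) + 1) with hLdef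
        set T := Finset.univ.filter (fun ℓ : Fin k => (ℓ : ℕ) < (j : ℕ) + 1 + t) with hTdef
        have hST : S ⊆ T := by
          intro x hx
          have hx' := Finset.mem_filter.mp hx
          have : (x : ℕ) ≤ (j : ℕ) := hx'.2.1
          exact Finset.mem_filter.mpr ⟨Finset.mem_univ _, by omega⟩
        have hLT : L ⊆ T := by
          intro x hx
          have hx' := Finset.mem_filter.mp hx
          exact Finset.mem_filter.mpr ⟨Finset.mem_univ _, hx'.2.1⟩
        have hdisj : Disjoint S L := by
          rw [Finset.disjoint_left]
          intro x hxS hxL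
          have h1 := (Finset.mem_filter.mp hxS).2.2
          have h2 := (Finset.mem_filter.mp hxL).2.2
          omega
        have hLcard : (j : ℕ) + 1 ≤ L.card := by
          have : (Finset.Iic j).card ≤ L.card := by
            apply Finset.card_le_card_of_injOn (fun x => π.symm x)
            · intro x hx
              have hxj : x ≤ j := Finset.mem_Iic.mp hx
              obtain ⟨ℓ, hℓ1, hℓ2⟩ := hc x (by
                have : (x : ℕ) ≤ (j : ℕ) := hxj
                omega)
              have hℓeq : π.symm x = ℓ := by
                rw [← hℓ2]; exact π.symm_apply_apply ℓ
              refine Finset.mem_filter.mpr ⟨Finset.mem_univ _, ?_, ?_⟩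
              · dsimp only; rw [hℓeq]; exact hℓ1
              · dsimp only; rw [hℓeq, hℓ2]
                have : (x : ℕ) ≤ (j : ℕ) := hxj
                omega
            · intro a _ b _ hab
              exact π.symm.injective hab
          have hIic : (Finset.Iic j).card = (j : ℕ) + 1 := Fin.card_Iic j
          omega
        have hTcard : T.card ≤ (j : ℕ) + 1 + t := by
          have : T.card ≤ (Finset.range ((j : ℕ) + 1 + t)).card := by
            apply Finset.card_le_card_of_injOn (fun x : Fin k => (x : ℕ))
            · intro x hx
              exact Finset.mem_range.mpr (Finset.mem_filter.mp hx).2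
            · intro a _ b _ hab
              exact Fin.val_injective hab
          simpa using this
        have hunion : (S ∪ L).card = S.card + L.card := Finset.card_union_of_disjoint hdisj
        have hsub : S ∪ L ⊆ T := Finset.union_subset hST hLT
        have := Finset.card_le_card hsub
        omega
      · exfalso
        have := hc ℓ0 (by
          have : (ℓ0 : ℕ) ≤ (j : ℕ) := hm0.2.1
          omega)
        omega
  refine ⟨key, ?_⟩
  intro j
  set S := Finset.univ.filter fun ℓ : Fin k => ℓ ≤ j ∧ (j : ℕ) + t < (π ℓ : ℕ) with hSdef
  set B := Finset.univ.filter
    (fun ℓ : Fin k => ℓ ≤ j ∧ (j : ℕ) ≤ (π ℓ : ℕ) + 1 ∧ (π ℓ : ℕ) ≤ (j : ℕ) + t) with hBdef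
  have hsub : (Finset.univ.filter fun ℓ : Fin k => ℓ ≤ j ∧ (j : ℕ) ≤ (π ℓ : ℕ) + 1) ⊆ S ∪ B := by
    intro x hx
    have hx' := Finset.mem_filter.mp hx
    rcases le_or_gt ((π x : ℕ)) ((j : ℕ) + t) with h | h
    · exact Finset.mem_union_right _
        (Finset.mem_filter.mpr ⟨Finset.mem_univ _, hx'.2.1, hx'.2.2, h⟩)
    · exact Finset.mem_union_left _
        (Finset.mem_filter.mpr ⟨Finset.mem_univ _, hx'.2.1, h⟩)
  have hBcard : B.card ≤ t + 2 := by
    have : B.card ≤ (Finset.Icc ((j : ℕ) - 1) ((j : ℕ) + t)).card := by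
      apply Finset.card_le_card_of_injOn (fun ℓ => (π ℓ : ℕ))
      · intro x hx
        have hx' := Finset.mem_filter.mp hx
        exact Finset.mem_Icc.mpr ⟨by dsimp only; omega, hx'.2.2.2⟩
      · intro a _ b _ hab
        exact π.injective (Fin.val_injective hab)
    have hIcc : (Finset.Icc ((j : ℕ) - 1) ((j : ℕ) + t)).card =
        (j : ℕ) + t + 1 - ((j : ℕ) - 1) := Nat.card_Icc _ _
    omega
  calc (Finset.univ.filter fun ℓ : Fin k => ℓ ≤ j ∧ (j : ℕ) ≤ (π ℓ : ℕ) + 1).card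
      ≤ (S ∪ B).card := Finset.card_le_card hsub
    _ ≤ S.card + B.card := Finset.card_union_le _ _
    _ ≤ 2 * t + 2 := by have h1 : S.card ≤ t := key j; omega
end

section
/- Let X be a finite set disjoint from [k], let t ≥ 1 with k ≥ t + 2, and let π : [k] → [k] be a permutation whose associated ordering τ = (π(1),…,π(k)) of [k] is not t-close to the identity ordering σ = (1,…,k). Let Z₀^σ ⊂ Z₁^σ ⊂ … ⊂ Z_k^σ be a [k]-chain in Q(X ∪ [k]) corresponding to σ, and Z₀^τ ⊂ Z₁^τ ⊂ … ⊂ Z_k^τ a [k]-chain corresponding to τ, with Z₀^σ = Z₀^τ and Z_k^σ = Z_k^τ. Then there exists an index i with 1 ≤ i < k − t such that the set {Z_j^σ, Z_j^τ : j ∈ {0, k} ∪ {i, i+1, …, i+t}} forms a copy of the subdivided diamond SD_{t,t} in Q(X ∪ [k]), with Z_j^σ incomparable to Z_{j'}^τ for all j, j' ∈ {i,…,i+t}. -/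
/-- The `(s,t)`-subdivided diamond: two parallel chains with `s` and `t` elements,
together with a common minimum and a common maximum. -/
abbrev SubdividedDiamond (s t : ℕ) : Type := WithBot (WithTop (Fin s ⊕ Fin t))

/-- Let `X` be a finite set disjoint from `[k]` (whose elements are embedded via `e`),
let `t ≥ 1`, `k ≥ t + 2`, and let `π` be a permutation of `[k]` whose ordering
`(π(1), …, π(k))` is *not* `t`-close to the identity ordering. Given a `[k]`-chain
`Zσ` corresponding to the identity ordering and a `[k]`-chain `Zτ` corresponding to
`(π(1), …, π(k))` (built from monotone families `S`, `T` of subsets of `X`), sharing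
their smallest and largest elements, there is an index `i` with `1 ≤ i < k - t` such
that `Zσ j` and `Zτ j'` are incomparable for all `j, j' ∈ {i, …, i + t}`, and the
collection `{Zσ j, Zτ j : j ∈ {0, k} ∪ {i, …, i + t}}` forms a copy of the subdivided
diamond `SD_{t,t}` in `Q(X ∪ [k])`. -/
theorem not_t_close_gives_subdivided_diamond {α : Type*} [DecidableEq α]
    (t k : ℕ) (ht : 1 ≤ t) (hk : t + 2 ≤ k)
    (X : Finset α) (e : Fin k ↪ α) (heX : ∀ i, e i ∉ X)
    (π : Equiv.Perm (Fin k))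
    (hnotclose : ¬ ∀ i : ℕ, 1 ≤ i → i ≤ k - t →
      (∀ x : Fin k, (x : ℕ) < i → ∃ ℓ : Fin k, (ℓ : ℕ) < i + t ∧ π ℓ = x) ∨
      (∀ ℓ : Fin k, (ℓ : ℕ) < i → (π ℓ : ℕ) < i + t))
    (S T : Fin (k + 1) → Finset α)
    (hS : Monotone S) (hSX : ∀ i, S i ⊆ X)
    (hT : Monotone T) (hTX : ∀ i, T i ⊆ X)
    (Zσ Zτ : Fin (k + 1) → Finset α)
    (hZσ : ∀ i, Zσ i =
      S i ∪ (Finset.univ.filter fun ℓ : Fin k => (ℓ : ℕ) < (i : ℕ)).image (fun ℓ => e ℓ))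
    (hZτ : ∀ i, Zτ i =
      T i ∪ (Finset.univ.filter fun ℓ : Fin k => (ℓ : ℕ) < (i : ℕ)).image (fun ℓ => e (π ℓ)))
    (hbot : Zσ 0 = Zτ 0) (htop : Zσ (Fin.last k) = Zτ (Fin.last k)) :
    ∃ i : ℕ, 1 ≤ i ∧ i < k - t ∧
      (∀ j j' : Fin (k + 1), i ≤ (j : ℕ) → (j : ℕ) ≤ i + t →
          i ≤ (j' : ℕ) → (j' : ℕ) ≤ i + t →
          ¬ Zσ j ⊆ Zτ j' ∧ ¬ Zτ j' ⊆ Zσ j) ∧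
      (∃ f : SubdividedDiamond t t ↪o Finset α,
        Set.range f ⊆ {W : Finset α | ∃ j : Fin (k + 1),
          ((j : ℕ) = 0 ∨ (j : ℕ) = k ∨ (i ≤ (j : ℕ) ∧ (j : ℕ) ≤ i + t)) ∧
          (W = Zσ j ∨ W = Zτ j)}) := by
  -- extract membership characterizations
  have hmemσ : ∀ (x : Fin k) (j : Fin (k + 1)), e x ∈ Zσ j ↔ (x : ℕ) < (j : ℕ) := by
    intro x j
    rw [hZσ]
    simp only [Finset.mem_union, Finset.mem_image, Finset.mem_filter, Finset.mem_univ, true_and]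
    constructor
    · rintro (h | ⟨ℓ, hℓ, he⟩)
      · exact absurd (hSX j h) (heX x)
      · rwa [e.injective he] at hℓ
    · intro h; exact Or.inr ⟨x, h, rfl⟩
  have hmemτ : ∀ (x : Fin k) (j : Fin (k + 1)), e x ∈ Zτ j ↔ ((π.symm x : Fin k) : ℕ) < (j : ℕ) := by
    intro x j
    rw [hZτ]
    simp only [Finset.mem_union, Finset.mem_image, Finset.mem_filter, Finset.mem_univ, true_and]
    constructor
    · rintro (h | ⟨ℓ, hℓ, he⟩)
      · exact absurd (hTX j h) (heX x)
      · have : ℓ = π.symm x := by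
          have := e.injective he
          exact π.injective (by simpa using this)
        rwa [this] at hℓ
    · intro h; exact Or.inr ⟨π.symm x, h, by simp⟩
  have hmonoσ : Monotone Zσ := by
    intro a b hab
    rw [hZσ a, hZσ b]
    refine Finset.union_subset_union (hS hab) (Finset.image_subset_image ?_)
    intro ℓ hℓ
    simp only [Finset.mem_filter, Finset.mem_univ, true_and] at *
    exact lt_of_lt_of_le hℓ hab
  have hmonoτ : Monotone Zτ := by
    intro a b hab
    rw [hZτ a, hZτ b]
    refine Finset.union_subset_union (hT hab) (Finset.image_subset_image ?_)
    intro ℓ hℓ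
    simp only [Finset.mem_filter, Finset.mem_univ, true_and] at *
    exact lt_of_lt_of_le hℓ hab
  have hssσ : StrictMono Zσ := by
    intro a b hab
    refine lt_of_le_of_ne (hmonoσ hab.le) ?_
    intro heq
    have ha : (a : ℕ) < k := lt_of_lt_of_le hab (Nat.lt_succ_iff.mp b.isLt)
    have h1 : e ⟨a, ha⟩ ∈ Zσ b := (hmemσ _ _).mpr hab
    rw [← heq] at h1
    have := (hmemσ _ _).mp h1
    simp at this
  have hssτ : StrictMono Zτ := by
    intro a b hab
    refine lt_of_le_of_ne (hmonoτ hab.le) ?_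
    intro heq
    have ha : (a : ℕ) < k := lt_of_lt_of_le hab (Nat.lt_succ_iff.mp b.isLt)
    have h1 : e (π ⟨a, ha⟩) ∈ Zτ b := by
      rw [hmemτ]; simpa using hab
    rw [← heq] at h1
    rw [hmemτ] at h1
    simp at h1
  -- extract the bad index
  push_neg at hnotclose
  obtain ⟨i, hi1, hile, hA, hB⟩ := hnotclose
  obtain ⟨x₀, hx₀i, hx₀⟩ := hA
  obtain ⟨ℓ₀, hℓ₀i, hℓ₀⟩ := hB
  -- in fact i < k - t
  have hilt : i < k - t := by
    rcases lt_or_eq_of_le hile with h | h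
    · exact h
    · exfalso
      have hit : i + t = k := by omega
      exact hx₀ (π.symm x₀) (by rw [hit]; exact (π.symm x₀).isLt) (by simp)
  have hitk : i + t < k := by omega
  have hincmp : ∀ j j' : Fin (k + 1), i ≤ (j : ℕ) → (j : ℕ) ≤ i + t →
      i ≤ (j' : ℕ) → (j' : ℕ) ≤ i + t → ¬ Zσ j ⊆ Zτ j' ∧ ¬ Zτ j' ⊆ Zσ j := by
    intro j j' hij hji hij' hji'
    constructor
    · intro hsub
      have h1 : e x₀ ∈ Zσ j := (hmemσ _ _).mpr (lt_of_lt_of_le hx₀i (by exact_mod_cast hij))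
      have h2 := (hmemτ _ _).mp (hsub h1)
      exact hx₀ (π.symm x₀) (lt_of_lt_of_le h2 hji') (by simp)
    · intro hsub
      have h1 : e (π ℓ₀) ∈ Zτ j' := by
        rw [hmemτ]
        simpa using lt_of_lt_of_le hℓ₀i hij'
      have h2 := (hmemσ _ _).mp (hsub h1)
      omega
  refine ⟨i, hi1, hilt, hincmp, ?_⟩
  · -- the order embedding
    have hidx : ∀ m : Fin t, i + 1 + (m : ℕ) < k + 1 := fun m => by omega
    set idx : Fin t → Fin (k + 1) := fun m => ⟨i + 1 + m, hidx m⟩ with hidxdef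
    set g : SubdividedDiamond t t → Finset α :=
      WithBot.recBotCoe (Zσ 0)
        (WithTop.recTopCoe (Zσ (Fin.last k))
          (Sum.elim (fun m => Zσ (idx m)) (fun m => Zτ (idx m)))) with hg
    have hg_bot : g ⊥ = Zσ 0 := rfl
    have hg_top : g ((⊤ : WithTop (Fin t ⊕ Fin t)) : SubdividedDiamond t t) = Zσ (Fin.last k) := rfl
    have hg_inl : ∀ m : Fin t,
        g (((Sum.inl m : Fin t ⊕ Fin t) : WithTop (Fin t ⊕ Fin t)) : SubdividedDiamond t t)
          = Zσ (idx m) := fun m => rfl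
    have hg_inr : ∀ m : Fin t,
        g (((Sum.inr m : Fin t ⊕ Fin t) : WithTop (Fin t ⊕ Fin t)) : SubdividedDiamond t t)
          = Zτ (idx m) := fun m => rfl
    have hlt0 : ∀ m : Fin t, (0 : Fin (k + 1)) < idx m := fun m => by
      simp [hidxdef, Fin.lt_def]
    have hltlast : ∀ m : Fin t, idx m < Fin.last k := fun m => by
      simp only [hidxdef, Fin.lt_def, Fin.val_last]
      omega
    have hinc : ∀ m n : Fin t, ¬ Zσ (idx m) ⊆ Zτ (idx n) ∧ ¬ Zτ (idx n) ⊆ Zσ (idx m) := by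
      intro m n
      have hm := m.isLt
      have hn := n.isLt
      exact hincmp (idx m) (idx n) (by simp only [hidxdef]; omega)
        (by simp only [hidxdef]; omega) (by simp only [hidxdef]; omega)
        (by simp only [hidxdef]; omega)
    have hord : ∀ a b : SubdividedDiamond t t, g a ≤ g b ↔ a ≤ b := by
      intro a b
      induction a using WithBot.recBotCoe with
      | bot =>
        simp only [hg_bot, bot_le, iff_true]
        induction b using WithBot.recBotCoe with
        | bot => exact le_refl _
        | coe x =>
          induction x using WithTop.recTopCoe with
          | top => exact hmonoσ (Fin.zero_le _)
          | coe y =>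
            rcases y with m | m
            · exact hmonoσ (Fin.zero_le _)
            · rw [hg_inr]; rw [hbot]; exact hmonoτ (Fin.zero_le _)
      | coe x =>
        induction b using WithBot.recBotCoe with
        | bot =>
          simp only [le_bot_iff, WithBot.coe_ne_bot, iff_false, hg_bot]
          induction x using WithTop.recTopCoe with
          | top =>
            intro h
            exact absurd (le_antisymm h (hmonoσ (Fin.zero_le _)))
              (ne_of_gt (hssσ (by rw [Fin.lt_def, Fin.val_last, Fin.val_zero]; omega : (0:Fin (k+1)) < Fin.last k)))
          | coe y =>
            rcases y with m | m
            · intro h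
              exact absurd (le_antisymm h (hmonoσ (Fin.zero_le _))) (ne_of_gt (hssσ (hlt0 m)))
            · rw [hg_inr, hbot]
              intro h
              exact absurd (le_antisymm h (hmonoτ (Fin.zero_le _))) (ne_of_gt (hssτ (hlt0 m)))
        | coe z =>
          rw [WithBot.coe_le_coe]
          induction x using WithTop.recTopCoe with
          | top =>
            induction z using WithTop.recTopCoe with
            | top => simp
            | coe y =>
              rw [hg_top]
              have hne : ¬ ((⊤ : WithTop (Fin t ⊕ Fin t)) ≤ (y : WithTop (Fin t ⊕ Fin t))) := by
                simp
              simp only [hne, iff_false]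
              rcases y with m | m
              · rw [hg_inl]
                intro h
                exact absurd (le_antisymm h (hmonoσ (hltlast m).le)) (ne_of_gt (hssσ (hltlast m)))
              · rw [hg_inr]
                intro h
                rw [htop] at h
                exact absurd (le_antisymm h (hmonoτ (hltlast m).le)) (ne_of_gt (hssτ (hltlast m)))
          | coe y =>
            induction z using WithTop.recTopCoe with
            | top =>
              simp only [le_top, iff_true, hg_top]
              rcases y with m | m
              · exact hmonoσ (hltlast m).le
              · rw [hg_inr, htop]; exact hmonoτ (hltlast m).le
            | coe w =>
              rw [WithTop.coe_le_coe]
              rcases y with m | m <;> rcases w with n | n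
              · rw [hg_inl, hg_inl, Sum.inl_le_inl_iff]
                constructor
                · intro h
                  by_contra hmn
                  have : (n : Fin t) < m := not_le.mp hmn
                  have hlt : idx n < idx m := by
                    simp only [hidxdef, Fin.lt_def]; omega
                  exact absurd (le_antisymm h (hmonoσ hlt.le)) (ne_of_gt (hssσ hlt))
                · intro h
                  exact hmonoσ (by simp only [hidxdef, Fin.le_def]; omega)
              · rw [hg_inl, hg_inr]
                exact iff_of_false (hinc m n).1 (Sum.not_inl_le_inr)
              · rw [hg_inr, hg_inl]
                exact iff_of_false (hinc n m).2 (Sum.not_inr_le_inl)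
              · rw [hg_inr, hg_inr, Sum.inr_le_inr_iff]
                constructor
                · intro h
                  by_contra hmn
                  have : (n : Fin t) < m := not_le.mp hmn
                  have hlt : idx n < idx m := by
                    simp only [hidxdef, Fin.lt_def]; omega
                  exact absurd (le_antisymm h (hmonoτ hlt.le)) (ne_of_gt (hssτ hlt))
                · intro h
                  exact hmonoτ (by simp only [hidxdef, Fin.le_def]; omega)
    refine ⟨OrderEmbedding.ofMapLEIff g hord, ?_⟩
    rintro W ⟨a, rfl⟩
    induction a using WithBot.recBotCoe with
    | bot => exact ⟨0, Or.inl rfl, Or.inl rfl⟩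
    | coe x =>
      induction x using WithTop.recTopCoe with
      | top => exact ⟨Fin.last k, Or.inr (Or.inl (Fin.val_last k)), Or.inl rfl⟩
      | coe y =>
        rcases y with m | m
        · exact ⟨idx m, Or.inr (Or.inr ⟨by simp only [hidxdef]; omega,
            by have := m.isLt; simp only [hidxdef]; omega⟩), Or.inl rfl⟩
        · exact ⟨idx m, Or.inr (Or.inr ⟨by simp only [hidxdef]; omega,
            by have := m.isLt; simp only [hidxdef]; omega⟩), Or.inr rfl⟩
end
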